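/- arXiv:2405.10438 — 5 statements merged into one kernel-verified Lean document; each statement's English description precedes it below -/
import Mathlib

section
/- Let a = max_{t∈[0,1]} (1+t)²(1-t)t / (4(1+4t+4t²)). Then for all x in the unit ball B ⊆ ℝ³, the inequality x_1² x_2² x_3 ≤ a(1 - T_3(x_3)) holds, where T_3(t) = 4t³ - 3t. -/
/-- With `a = max_{t∈[0,1]} (1+t)²(1-t)t / (4(1+4t+4t²))`, for all `x` in the unit
ball of `ℝ³` one has `x_1² x_2² x_3 ≤ a (1 - T_3(x_3))`, where `T_3(t) = 4t³-3t`. -/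
theorem stmt_9 (a : ℝ)
    (ha : IsGreatest {v : ℝ | ∃ t ∈ Set.Icc (0:ℝ) 1,
      v = (1 + t)^2 * (1 - t) * t / (4 * (1 + 4*t + 4*t^2))} a)
    (x₁ x₂ x₃ : ℝ) (hx : x₁^2 + x₂^2 + x₃^2 ≤ 1) :
    x₁^2 * x₂^2 * x₃ ≤ a * (1 - (4 * x₃^3 - 3 * x₃)) := by
  have ha0 : 0 ≤ a := by
    have : (0:ℝ) ≤ a := ha.2 ⟨0, by norm_num, by norm_num⟩
    linarith
  have hx3 : x₃^2 ≤ 1 := by nlinarith [sq_nonneg x₁, sq_nonneg x₂]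
  have hx3u : x₃ ≤ 1 := by nlinarith
  have hx3l : -1 ≤ x₃ := by nlinarith
  rcases le_or_gt x₃ 0 with h | h
  · have hT : 0 ≤ 1 - (4 * x₃^3 - 3 * x₃) := by nlinarith [sq_nonneg (2*x₃+1)]
    have : x₁^2 * x₂^2 * x₃ ≤ 0 := by
      have := mul_nonneg (sq_nonneg x₁) (sq_nonneg x₂)
      nlinarith
    nlinarith [mul_nonneg ha0 hT]
  · have hmem : (1 + x₃)^2 * (1 - x₃) * x₃ / (4 * (1 + 4*x₃ + 4*x₃^2)) ≤ a :=
      ha.2 ⟨x₃, ⟨le_of_lt h, hx3u⟩, rfl⟩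
    have hden : (0:ℝ) < 4 * (1 + 4*x₃ + 4*x₃^2) := by nlinarith
    have key : (1 + x₃)^2 * (1 - x₃) * x₃ ≤ a * (4 * (1 + 4*x₃ + 4*x₃^2)) := by
      rw [div_le_iff₀ hden] at hmem
      linarith
    -- multiply key by (1 - x₃) ≥ 0
    have h1t : 0 ≤ 1 - x₃ := by linarith
    have key2 : (1 + x₃)^2 * (1 - x₃)^2 * x₃ ≤ a * (4 * (1 + 4*x₃ + 4*x₃^2)) * (1 - x₃) := by
      nlinarith [mul_le_mul_of_nonneg_right key h1t]
    have hamgm : x₁^2 * x₂^2 ≤ ((1 - x₃^2)/2)^2 := by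
      nlinarith [sq_nonneg (x₁^2 - x₂^2), sq_nonneg (x₁^2 + x₂^2)]
    have := mul_le_mul_of_nonneg_right hamgm (le_of_lt h)
    nlinarith [this, key2]
end

section
/- Let a = max_{t∈[0,1]} (1+t)²(1-t)t / (4(1+4t+4t²)). Then the polynomial P(x) = x_1²x_2²x_3 + a·T_3(x_3) satisfies ‖P‖_B = a on the closed euclidean unit ball B ⊆ ℝ³, where T_3(t) = 4t³-3t. -/
private lemma key_bound (a s u : ℝ) (ha0 : 0 ≤ a) (hs0 : 0 ≤ s) (hs1 : s ≤ 1)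
    (hu0 : 0 ≤ u) (hu : u ≤ (1 - s^2)^2 / 4)
    (hf : (1 + s)^2 * (1 - s) * s ≤ a * (4 * (1 + 4*s + 4*s^2))) :
    |u * s + a * (4 * s^3 - 3 * s)| ≤ a := by
  rw [abs_le]
  constructor
  · nlinarith [mul_nonneg hu0 hs0, mul_nonneg (mul_nonneg ha0 (by linarith : (0:ℝ) ≤ s + 1)) (sq_nonneg (2*s - 1))]
  · nlinarith [mul_nonneg (sub_nonneg.2 hf) (by linarith : (0:ℝ) ≤ 1 - s),
      mul_le_mul_of_nonneg_right hu hs0]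

/-- With `a = max_{t∈[0,1]} (1+t)²(1-t)t / (4(1+4t+4t²))`, the polynomial
`P(x) = x_1²x_2²x_3 + a T_3(x_3)` has uniform norm `a` on the closed unit ball of
`ℝ³`, where `T_3(t) = 4t³-3t`. -/
theorem stmt_10 (a : ℝ)
    (ha : IsGreatest {v : ℝ | ∃ t ∈ Set.Icc (0:ℝ) 1,
      v = (1 + t)^2 * (1 - t) * t / (4 * (1 + 4*t + 4*t^2))} a) :
    IsGreatest {y : ℝ | ∃ x₁ x₂ x₃ : ℝ, x₁^2 + x₂^2 + x₃^2 ≤ 1 ∧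
      y = |x₁^2 * x₂^2 * x₃ + a * (4 * x₃^3 - 3 * x₃)|} a := by
  obtain ⟨⟨t, ⟨ht0, ht1⟩, hta⟩, hub⟩ := ha
  have ha0 : 0 ≤ a := by
    have h0 : (0:ℝ) ∈ {v : ℝ | ∃ t ∈ Set.Icc (0:ℝ) 1,
        v = (1 + t)^2 * (1 - t) * t / (4 * (1 + 4*t + 4*t^2))} :=
      ⟨0, ⟨le_refl 0, zero_le_one⟩, by norm_num⟩
    linarith [hub h0]
  have hden : (0:ℝ) < 4 * (1 + 4*t + 4*t^2) := by nlinarith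
  have key : a * (4 * (1 + 4*t + 4*t^2)) = (1 + t)^2 * (1 - t) * t := by
    rw [hta, div_mul_cancel₀ _ (ne_of_gt hden)]
  have hfle : ∀ s : ℝ, 0 ≤ s → s ≤ 1 →
      (1 + s)^2 * (1 - s) * s ≤ a * (4 * (1 + 4*s + 4*s^2)) := by
    intro s h0 h1
    have hd : (0:ℝ) < 4 * (1 + 4*s + 4*s^2) := by nlinarith
    have hmem : ((1 + s)^2 * (1 - s) * s / (4 * (1 + 4*s + 4*s^2))) ∈ {v : ℝ | ∃ t ∈ Set.Icc (0:ℝ) 1,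
        v = (1 + t)^2 * (1 - t) * t / (4 * (1 + 4*t + 4*t^2))} := ⟨s, ⟨h0, h1⟩, rfl⟩
    have := hub hmem
    calc (1 + s)^2 * (1 - s) * s
        = ((1 + s)^2 * (1 - s) * s / (4 * (1 + 4*s + 4*s^2))) * (4 * (1 + 4*s + 4*s^2)) := by
          field_simp
      _ ≤ a * (4 * (1 + 4*s + 4*s^2)) := by
          exact mul_le_mul_of_nonneg_right this (le_of_lt hd)
  constructor
  · -- membership: attained at x₁ = x₂ = sqrt((1-t²)/2), x₃ = t
    refine ⟨Real.sqrt ((1 - t^2)/2), Real.sqrt ((1 - t^2)/2), t, ?_, ?_⟩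
    · have h1 : (0:ℝ) ≤ (1 - t^2)/2 := by nlinarith
      rw [Real.sq_sqrt h1]; linarith
    · have h1 : (0:ℝ) ≤ (1 - t^2)/2 := by nlinarith
      rw [Real.sq_sqrt h1]
      have : (1 - t^2)/2 * ((1 - t^2)/2) * t + a * (4 * t^3 - 3 * t) = a := by
        linear_combination ((t - 1)/4) * key
      rw [this, abs_of_nonneg ha0]
  · rintro y ⟨x₁, x₂, x₃, hball, rfl⟩
    have hs2 : x₃^2 ≤ 1 := by nlinarith [sq_nonneg x₁, sq_nonneg x₂]
    have hu0 : 0 ≤ x₁^2 * x₂^2 := by positivity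
    have hu : x₁^2 * x₂^2 ≤ (1 - x₃^2)^2 / 4 := by nlinarith [sq_nonneg (x₁^2 - x₂^2), sq_nonneg (x₁^2 + x₂^2)]
    rcases le_or_gt 0 x₃ with h | h
    · have h1 : x₃ ≤ 1 := by nlinarith
      exact key_bound a x₃ _ ha0 h h1 hu0 hu (hfle x₃ h h1)
    · have h0 : 0 ≤ -x₃ := by linarith
      have h1 : -x₃ ≤ 1 := by nlinarith
      have := key_bound a (-x₃) (x₁^2 * x₂^2) ha0 h0 h1 hu0 (by ring_nf; ring_nf at hu; linarith) (hfle _ h0 h1)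
      rw [abs_le] at this ⊢
      constructor <;> nlinarith [this.1, this.2]
end

section
/- With a = max_{t∈[0,1]} (1+t)²(1-t)t / (4(1+4t+4t²)), the error of best uniform approximation on the euclidean unit ball B ⊆ ℝ³ to the monomial x_1²x_2²x_3 by trivariate polynomials of total degree at most 4 equals a, and a Chebyshev polynomial (best deviation) is P(x) = x_1²x_2²x_3 + a·T_3(x_3). -/
open MvPolynomial

set_option maxHeartbeats 4000000 in
/-- With `a = max_{t∈[0,1]} (1+t)²(1-t)t / (4(1+4t+4t²))`, the error of best uniform
approximation on the unit ball of `ℝ³` to `x_1²x_2²x_3` by trivariate polynomials of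
total degree `≤ 4` equals `a`, and a Chebyshev polynomial is
`P(x) = x_1²x_2²x_3 + a T_3(x_3)`, i.e. the best approximant is `-a T_3(x_3)`. -/
theorem stmt_11 (a : ℝ)
    (ha : IsGreatest {v : ℝ | ∃ t ∈ Set.Icc (0:ℝ) 1,
      v = (1 + t)^2 * (1 - t) * t / (4 * (1 + 4*t + 4*t^2))} a)
    (B : Set (Fin 3 → ℝ)) (hB : B = {x : Fin 3 → ℝ | x 0 ^ 2 + x 1 ^ 2 + x 2 ^ 2 ≤ 1})
    (q : MvPolynomial (Fin 3) ℝ)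
    (hq : q = - (MvPolynomial.C a * (4 * X 2 ^ 3 - 3 * X 2))) :
    q.totalDegree ≤ 4 ∧
    sSup {y : ℝ | ∃ x ∈ B, y = |x 0 ^ 2 * x 1 ^ 2 * x 2 - MvPolynomial.eval x q|} = a ∧
    ∀ p : MvPolynomial (Fin 3) ℝ, p.totalDegree ≤ 4 →
      a ≤ sSup {y : ℝ | ∃ x ∈ B, y = |x 0 ^ 2 * x 1 ^ 2 * x 2 - MvPolynomial.eval x p|} := by
  obtain ⟨⟨t, ⟨ht0, ht1⟩, hat⟩, hub⟩ := ha
  have hden : (0:ℝ) < 4 * (1 + 4*t + 4*t^2) := by nlinarith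
  have ha0 : a * (4 * (1 + 4*t + 4*t^2)) = (1 + t)^2 * (1 - t) * t := by
    rw [hat, div_mul_cancel₀]; positivity
  have hanneg : (0:ℝ) ≤ a := hub ⟨0, ⟨le_refl 0, zero_le_one⟩, by norm_num⟩
  have hkey : ∀ σ : ℝ, 0 ≤ σ → σ ≤ 1 → σ*(1-σ)*(1+σ)^2 ≤ 4*a*(1+2*σ)^2 := by
    intro σ h0 h1
    have hm : (1 + σ)^2 * (1 - σ) * σ / (4 * (1 + 4*σ + 4*σ^2)) ≤ a :=
      hub ⟨σ, ⟨h0, h1⟩, rfl⟩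
    have hpos : (0:ℝ) < 4 * (1 + 4*σ + 4*σ^2) := by nlinarith
    rw [div_le_iff₀ hpos] at hm
    nlinarith [hm]
  have h25 : (49:ℝ)/1350 ≤ a := hub ⟨2/5, ⟨by norm_num, by norm_num⟩, by norm_num⟩
  have hapos : 0 < a := by linarith
  have ht0' : 0 < t := by nlinarith
  have ht1' : t < 1 := by nlinarith
  have hthalf : t ≤ 1/2 := by
    by_contra h
    push_neg at h
    nlinarith [sq_nonneg (t - 1/2), mul_nonneg (by linarith : (0:ℝ) ≤ t - 1/2)
      (by linarith : (0:ℝ) ≤ 1 - t), sq_nonneg (t-1), sq_nonneg t,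
      mul_nonneg (mul_nonneg (by linarith : (0:ℝ) ≤ t - 1/2)
        (by linarith : (0:ℝ) ≤ t - 1/2)) (by linarith : (0:ℝ) ≤ 1 - t)]
  have hupper : ∀ x0 x1 s : ℝ, x0^2 + x1^2 + s^2 ≤ 1 →
      |x0^2*x1^2*s + a*(4*s^3 - 3*s)| ≤ a := by
    intro x0 x1 s hx
    set u : ℝ := x0^2*x1^2 with hu
    have hu0 : 0 ≤ u := by positivity
    have hs2 : s^2 ≤ 1 := by nlinarith [sq_nonneg x0, sq_nonneg x1]
    have hs1 : -1 ≤ s := by nlinarith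
    have hs1' : s ≤ 1 := by nlinarith
    have h4u : 4*u ≤ (1-s^2)^2 := by nlinarith [sq_nonneg (x0^2 - x1^2), sq_nonneg (x0^2+x1^2)]
    rw [abs_le]
    constructor
    · rcases le_or_gt 0 s with hs | hs
      · have h1 : 0 ≤ a * ((1+s)*(1-2*s)^2) :=
          mul_nonneg hanneg (mul_nonneg (by linarith) (sq_nonneg _))
        nlinarith [mul_nonneg hu0 hs]
      · have h5 : (1-s^2)^2*s/4 ≤ u*s := by nlinarith
        have hk := hkey (-s) (by linarith) (by linarith)
        have h6 : -(s*(1-s^2)^2/4) ≤ a*(1-3*s+4*s^3) := by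
          nlinarith [mul_nonneg (by linarith : (0:ℝ) ≤ 1+s)
            (by linarith [hk] : (0:ℝ) ≤ 4*a*(1+2*(-s))^2 - (-s)*(1-(-s))*(1+(-s))^2)]
        linarith
    · rcases le_or_gt 0 s with hs | hs
      · have h5 : u*s ≤ (1-s^2)^2*s/4 := by nlinarith
        have hk := hkey s hs hs1'
        have h6 : s*(1-s^2)^2/4 ≤ a*(1+3*s-4*s^3) := by
          nlinarith [mul_nonneg (by linarith : (0:ℝ) ≤ 1-s)
            (by linarith [hk] : (0:ℝ) ≤ 4*a*(1+2*s)^2 - s*(1-s)*(1+s)^2)]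
        linarith
      · have h1 : 0 ≤ a * ((1-s)*(1+2*s)^2) :=
          mul_nonneg hanneg (mul_nonneg (by linarith) (sq_nonneg _))
        nlinarith [mul_nonneg hu0 (by linarith : (0:ℝ) ≤ -s)]
  refine ⟨?_, ?_, ?_⟩
  · -- total degree of q
    rw [hq, totalDegree_neg]
    refine le_trans (totalDegree_mul _ _) ?_
    rw [totalDegree_C, zero_add]
    refine le_trans (totalDegree_sub _ _) ?_
    apply max_le
    · refine le_trans (totalDegree_mul _ _) ?_
      have h4 : ((4:MvPolynomial (Fin 3) ℝ)).totalDegree = 0 := by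
        rw [show ((4:MvPolynomial (Fin 3) ℝ)) = C 4 by simp [map_ofNat], totalDegree_C]
      rw [h4, zero_add]
      refine le_trans (totalDegree_pow _ _) ?_
      simp [totalDegree_X]
    · refine le_trans (totalDegree_mul _ _) ?_
      have h3 : ((3:MvPolynomial (Fin 3) ℝ)).totalDegree = 0 := by
        rw [show ((3:MvPolynomial (Fin 3) ℝ)) = C 3 by simp [map_ofNat], totalDegree_C]
      rw [h3, zero_add, totalDegree_X]
      norm_num
  · -- sSup for q equals a
    have hevq : ∀ x : Fin 3 → ℝ, MvPolynomial.eval x q = -(a * (4 * (x 2)^3 - 3 * (x 2))) := by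
      intro x; rw [hq]; simp
    set c : ℝ := Real.sqrt ((1 - t^2)/2) with hc
    have hc2 : c^2 = (1 - t^2)/2 := Real.sq_sqrt (by nlinarith)
    have hc4 : c^4 = ((1 - t^2)/2)^2 := by rw [← hc2]; ring
    have hmem : a ∈ {y : ℝ | ∃ x ∈ B, y = |x 0 ^ 2 * x 1 ^ 2 * x 2 - MvPolynomial.eval x q|} := by
      refine ⟨![c, c, t], ?_, ?_⟩
      · rw [hB]; simp only [Set.mem_setOf_eq, Matrix.cons_val_zero, Matrix.cons_val_one,
          Matrix.head_cons, Matrix.cons_val_two, Matrix.tail_cons]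
        nlinarith [hc2]
      · rw [hevq]
        simp only [Matrix.cons_val_zero, Matrix.cons_val_one, Matrix.head_cons,
          Matrix.cons_val_two, Matrix.tail_cons]
        have hval : c^2*c^2*t + a*(4*t^3 - 3*t) = a := by
          linear_combination t*hc4 - ((1-t)/4)*ha0
        rw [show c ^ 2 * c ^ 2 * t - -(a * (4 * t ^ 3 - 3 * t)) = c^2*c^2*t + a*(4*t^3-3*t)
            by ring, hval, abs_of_nonneg hanneg]
    have hub2 : ∀ y ∈ {y : ℝ | ∃ x ∈ B, y = |x 0 ^ 2 * x 1 ^ 2 * x 2 - MvPolynomial.eval x q|},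
        y ≤ a := by
      rintro y ⟨x, hxB, rfl⟩
      rw [hevq]
      rw [hB] at hxB
      have := hupper (x 0) (x 1) (x 2) hxB
      calc |x 0 ^ 2 * x 1 ^ 2 * x 2 - -(a * (4 * (x 2)^3 - 3 * (x 2)))|
          = |(x 0)^2*(x 1)^2*(x 2) + a*(4*(x 2)^3 - 3*(x 2))| := by ring_nf
        _ ≤ a := this
    exact le_antisymm (csSup_le ⟨a, hmem⟩ hub2) (le_csSup ⟨a, hub2⟩ hmem)
  · -- lower bound for arbitrary p
    intro p hp
    set c : ℝ := Real.sqrt ((1 - t^2)/2) with hc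
    have hc2 : c^2 = (1 - t^2)/2 := Real.sq_sqrt (by nlinarith)
    set b : ℝ := Real.sqrt 3 / 2 with hbdef
    have hb2 : b^2 = 3/4 := by
      rw [hbdef, div_pow, Real.sq_sqrt (by norm_num : (3:ℝ) ≥ 0)]; norm_num
    set W2 : ℝ := a*t*(1-4*t^2)/3 with hW2
    set W3 : ℝ := 8*a*t*(1-t^2)/3 with hW3
    have hW2n : 0 ≤ W2 := by
      rw [hW2]; apply div_nonneg _ (by norm_num)
      exact mul_nonneg (mul_nonneg hanneg ht0) (by nlinarith)
    have hW3n : 0 ≤ W3 := by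
      rw [hW3]; apply div_nonneg _ (by norm_num)
      exact mul_nonneg (mul_nonneg (mul_nonneg (by norm_num) hanneg) ht0) (by nlinarith)
    set P : Fin 18 → Fin 3 → ℝ :=
      ![![c,c,t], ![-c,c,t], ![c,-c,t], ![-c,-c,t],
        ![c,c,-t], ![-c,c,-t], ![c,-c,-t], ![-c,-c,-t],
        ![0,0,1], ![0,0,-1],
        ![b,0,1/2], ![-b,0,1/2], ![0,b,1/2], ![0,-b,1/2],
        ![b,0,-1/2], ![-b,0,-1/2], ![0,b,-1/2], ![0,-b,-1/2]] with hP
    set w : Fin 18 → ℝ :=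
      ![a/8, a/8, a/8, a/8, -(a/8), -(a/8), -(a/8), -(a/8),
        W2/2, -(W2/2),
        -(W3/8), -(W3/8), -(W3/8), -(W3/8),
        W3/8, W3/8, W3/8, W3/8] with hw
    have hmono : ∀ m n k : ℕ, m + n + k ≤ 4 →
        ∑ j : Fin 18, w j * (P j 0 ^ m * P j 1 ^ n * P j 2 ^ k) = 0 := by
      intro m n k hmnk
      have hm : m ≤ 4 := by omega
      have hn : n ≤ 4 := by omega
      have hk : k ≤ 4 := by omega
      simp only [hP, hw, hW2, hW3, Fin.sum_univ_succ, Fin.sum_univ_zero,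
        Matrix.cons_val_zero, Matrix.cons_val_one, Matrix.head_cons, Matrix.cons_val_succ,
        Matrix.cons_val_two, Matrix.tail_cons,
        add_zero]
      interval_cases m <;> interval_cases n <;> interval_cases k <;>
        first
        | (exfalso; omega)
        | ring1
        | linear_combination (a*t)*hc2 + (2*a*t^3/3 - 2*a*t/3)*hb2
    have hev : ∀ x : Fin 3 → ℝ, MvPolynomial.eval x p
        = ∑ α ∈ p.support, coeff α p * (x 0 ^ α 0 * x 1 ^ α 1 * x 2 ^ α 2) := by
      intro x
      conv_lhs => rw [p.as_sum]
      rw [map_sum]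
      refine Finset.sum_congr rfl fun α _ => ?_
      rw [eval_monomial]
      congr 1
      rw [Finsupp.prod_fintype _ _ (fun i => pow_zero (x i)), Fin.prod_univ_three]
    have hL : ∑ j : Fin 18, w j * MvPolynomial.eval (P j) p = 0 := by
      calc ∑ j : Fin 18, w j * MvPolynomial.eval (P j) p
          = ∑ j : Fin 18, ∑ α ∈ p.support,
              coeff α p * (w j * (P j 0 ^ α 0 * P j 1 ^ α 1 * P j 2 ^ α 2)) := by
            refine Finset.sum_congr rfl fun j _ => ?_
            rw [hev, Finset.mul_sum]
            exact Finset.sum_congr rfl fun α _ => by ring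
        _ = ∑ α ∈ p.support, coeff α p *
              ∑ j : Fin 18, w j * (P j 0 ^ α 0 * P j 1 ^ α 1 * P j 2 ^ α 2) := by
            rw [Finset.sum_comm]
            exact Finset.sum_congr rfl fun α _ => (Finset.mul_sum _ _ _).symm
        _ = 0 := Finset.sum_eq_zero fun α hα => by
            have h1 := MvPolynomial.le_totalDegree hα
            have h2 : (α.sum fun _ e => e) = α 0 + α 1 + α 2 := by
              rw [Finsupp.sum_fintype _ _ (fun i => rfl), Fin.sum_univ_three]
            rw [hmono (α 0) (α 1) (α 2) (by omega), mul_zero]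
    have hBc : IsCompact B := by
      rw [hB]
      apply IsCompact.of_isClosed_subset (isCompact_closedBall (0 : Fin 3 → ℝ) 1)
      · exact isClosed_le (by fun_prop) continuous_const
      · intro x hx
        simp only [Set.mem_setOf_eq] at hx
        rw [Metric.mem_closedBall, dist_zero_right]
        rw [pi_norm_le_iff_of_nonneg zero_le_one]
        intro i
        rw [Real.norm_eq_abs, abs_le]
        have hs : x i ^ 2 ≤ 1 := by
          fin_cases i
          · show x 0 ^ 2 ≤ 1; nlinarith [sq_nonneg (x 1), sq_nonneg (x 2)]
          · show x 1 ^ 2 ≤ 1; nlinarith [sq_nonneg (x 0), sq_nonneg (x 2)]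
          · show x 2 ^ 2 ≤ 1; nlinarith [sq_nonneg (x 0), sq_nonneg (x 1)]
        constructor <;> nlinarith [hs]
    have hgc : Continuous fun x : Fin 3 → ℝ =>
        |x 0 ^ 2 * x 1 ^ 2 * x 2 - MvPolynomial.eval x p| := by
      apply Continuous.abs
      exact Continuous.sub (by fun_prop) (MvPolynomial.continuous_eval p)
    have hSim : {y : ℝ | ∃ x ∈ B, y = |x 0 ^ 2 * x 1 ^ 2 * x 2 - MvPolynomial.eval x p|}
        = (fun x : Fin 3 → ℝ => |x 0 ^ 2 * x 1 ^ 2 * x 2 - MvPolynomial.eval x p|) '' B := by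
      ext y; simp [Set.image, eq_comm]
    have hbdd : BddAbove {y : ℝ | ∃ x ∈ B,
        y = |x 0 ^ 2 * x 1 ^ 2 * x 2 - MvPolynomial.eval x p|} := by
      rw [hSim]; exact (hBc.image hgc).bddAbove
    set M : ℝ := sSup {y : ℝ | ∃ x ∈ B,
        y = |x 0 ^ 2 * x 1 ^ 2 * x 2 - MvPolynomial.eval x p|} with hM
    have hPB : ∀ j : Fin 18, P j ∈ B := by
      rw [hB]
      simp only [hP, Set.mem_setOf_eq, Fin.forall_fin_succ,
        Matrix.cons_val_zero, Matrix.cons_val_one, Matrix.head_cons, Matrix.cons_val_succ,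
        Matrix.cons_val_two, Matrix.tail_cons, and_true]
      refine ⟨?_, ?_, ?_, ?_, ?_, ?_, ?_, ?_, ?_, ?_, ?_, ?_, ?_, ?_, ?_, ?_, ?_, ?_,
        fun i => i.elim0⟩ <;> nlinarith [hc2, hb2]
    have hMj : ∀ j : Fin 18, |P j 0 ^ 2 * P j 1 ^ 2 * P j 2 - MvPolynomial.eval (P j) p| ≤ M :=
      fun j => le_csSup hbdd ⟨P j, hPB j, rfl⟩
    have hF : ∑ j : Fin 18, w j * (P j 0 ^ 2 * P j 1 ^ 2 * P j 2) = a * (t*(1-t^2)^2/4) := by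
      simp only [hP, hw, Fin.sum_univ_succ, Fin.sum_univ_zero,
        Matrix.cons_val_zero, Matrix.cons_val_one, Matrix.head_cons, Matrix.cons_val_succ,
        Matrix.cons_val_two, Matrix.tail_cons, add_zero]
      linear_combination (a*t*(c^2 + (1-t^2)/2))*hc2
    have hchain : a * (t*(1-t^2)^2/4) ≤ (t*(1-t^2)^2/4) * M := by
      calc a * (t*(1-t^2)^2/4)
          = ∑ j : Fin 18, w j * (P j 0 ^ 2 * P j 1 ^ 2 * P j 2 - MvPolynomial.eval (P j) p) := by
            rw [show (∑ j : Fin 18, w j * (P j 0 ^ 2 * P j 1 ^ 2 * P j 2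
                  - MvPolynomial.eval (P j) p))
                = (∑ j : Fin 18, w j * (P j 0 ^ 2 * P j 1 ^ 2 * P j 2))
                  - ∑ j : Fin 18, w j * MvPolynomial.eval (P j) p by
              rw [← Finset.sum_sub_distrib]; exact Finset.sum_congr rfl fun j _ => by ring]
            rw [hF, hL, sub_zero]
        _ ≤ ∑ j : Fin 18, |w j| * M := by
            refine Finset.sum_le_sum fun j _ => ?_
            calc w j * (P j 0 ^ 2 * P j 1 ^ 2 * P j 2 - MvPolynomial.eval (P j) p)
                ≤ |w j * (P j 0 ^ 2 * P j 1 ^ 2 * P j 2 - MvPolynomial.eval (P j) p)| :=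
                  le_abs_self _
              _ = |w j| * |P j 0 ^ 2 * P j 1 ^ 2 * P j 2 - MvPolynomial.eval (P j) p| :=
                  abs_mul _ _
              _ ≤ |w j| * M := mul_le_mul_of_nonneg_left (hMj j) (abs_nonneg _)
        _ = (t*(1-t^2)^2/4) * M := by
            have habs : ∑ j : Fin 18, |w j| = a + W2 + W3 := by
              have e1 : |a/8| = a/8 := abs_of_nonneg (by linarith)
              have e2 : |W2/2| = W2/2 := abs_of_nonneg (by linarith)
              have e3 : |W3/8| = W3/8 := abs_of_nonneg (by linarith)
              simp only [hw, Fin.sum_univ_succ, Fin.sum_univ_zero,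
                Matrix.cons_val_zero, Matrix.cons_val_succ, abs_neg, add_zero, e1, e2, e3]
              ring
            rw [← Finset.sum_mul, habs, hW2, hW3]
            linear_combination (M*(1-t)/4)*ha0
    have hN : (0:ℝ) < t*(1-t^2)^2/4 := by
      apply div_pos _ (by norm_num)
      apply mul_pos ht0'
      nlinarith
    exact le_of_mul_le_mul_right (by nlinarith [hchain]) hN
end

section
/- The equation max_{y∈[0,1/2]} y(1-2y)(y-τ)² = τ²/18 has a unique solution τ in [0, 1/4]. -/
open Set

noncomputable def Sset13 (τ : ℝ) : Set ℝ :=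
  {v : ℝ | ∃ y ∈ Set.Icc (0:ℝ) (1/2), v = y * (1 - 2*y) * (y - τ)^2}

noncomputable def F13 (τ : ℝ) : ℝ := sSup (Sset13 τ)

lemma Sset13_eq_image (τ : ℝ) :
    Sset13 τ = (fun y => y * (1 - 2*y) * (y - τ)^2) '' Set.Icc (0:ℝ) (1/2) := by
  ext v
  constructor
  · rintro ⟨y, hy, rfl⟩; exact ⟨y, hy, rfl⟩
  · rintro ⟨y, hy, rfl⟩; exact ⟨y, hy, rfl⟩

lemma F13_isGreatest (τ : ℝ) : IsGreatest (Sset13 τ) (F13 τ) := by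
  rw [Sset13_eq_image]
  have hc : IsCompact ((fun y => y * (1 - 2*y) * (y - τ)^2) '' Set.Icc (0:ℝ) (1/2)) :=
    (isCompact_Icc).image (by continuity)
  have hne : ((fun y => y * (1 - 2*y) * (y - τ)^2) '' Set.Icc (0:ℝ) (1/2)).Nonempty :=
    ⟨_, ⟨0, by norm_num, rfl⟩⟩
  have := hc.isGreatest_sSup hne
  rwa [F13, Sset13_eq_image]

lemma F13_mono {τ₁ τ₂ : ℝ} (h1 : τ₁ ∈ Set.Icc (0:ℝ) (1/4)) (h2 : τ₂ ∈ Set.Icc (0:ℝ) (1/4))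
    (h12 : τ₁ ≤ τ₂) : F13 τ₂ ≤ F13 τ₁ := by
  obtain ⟨y, hy, hFy⟩ := (F13_isGreatest τ₂).1
  obtain ⟨hy0, hy2⟩ := hy
  obtain ⟨ha0, ha4⟩ := h1
  obtain ⟨hb0, hb4⟩ := h2
  rcases le_total y (1/4) with hy4 | hy4
  · have hmem : (1/2 - y) ∈ Set.Icc (0:ℝ) (1/2) := ⟨by linarith, by linarith⟩
    have hub : (1/2 - y) * (1 - 2*(1/2 - y)) * ((1/2 - y) - τ₁)^2 ≤ F13 τ₁ :=
      (F13_isGreatest τ₁).2 ⟨1/2 - y, hmem, rfl⟩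
    have step1 : y * (1 - 2*y) * (y - τ₂)^2
        ≤ (1/2 - y) * (1 - 2*(1/2 - y)) * ((1/2 - y) - τ₂)^2 := by
      nlinarith [mul_nonneg (mul_nonneg (mul_nonneg hy0 (by linarith : (0:ℝ) ≤ 1 - 2*y))
        (by linarith : (0:ℝ) ≤ 1/2 - 2*y)) (by linarith : (0:ℝ) ≤ 1/2 - 2*τ₂)]
    have step2 : (1/2 - y) * (1 - 2*(1/2 - y)) * ((1/2 - y) - τ₂)^2
        ≤ (1/2 - y) * (1 - 2*(1/2 - y)) * ((1/2 - y) - τ₁)^2 := by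
      nlinarith [mul_nonneg (mul_nonneg (mul_nonneg (by linarith : (0:ℝ) ≤ 1/2 - y)
        (by linarith : (0:ℝ) ≤ 2*y)) (by linarith : (0:ℝ) ≤ τ₂ - τ₁))
        (by linarith : (0:ℝ) ≤ 2*(1/2 - y) - τ₁ - τ₂)]
    linarith [hFy ▸ (le_trans step1 step2).trans hub]
  · have hub : y * (1 - 2*y) * (y - τ₁)^2 ≤ F13 τ₁ :=
      (F13_isGreatest τ₁).2 ⟨y, ⟨hy0, hy2⟩, rfl⟩
    have step : y * (1 - 2*y) * (y - τ₂)^2 ≤ y * (1 - 2*y) * (y - τ₁)^2 := by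
      nlinarith [mul_nonneg (mul_nonneg (mul_nonneg hy0 (by linarith : (0:ℝ) ≤ 1 - 2*y))
        (by linarith : (0:ℝ) ≤ τ₂ - τ₁)) (by linarith : (0:ℝ) ≤ 2*y - τ₁ - τ₂)]
    linarith [hFy ▸ step.trans hub]

lemma F13_lip {τ₁ τ₂ : ℝ} (h1 : τ₁ ∈ Set.Icc (0:ℝ) (1/4)) (h2 : τ₂ ∈ Set.Icc (0:ℝ) (1/4))
    (h12 : τ₁ ≤ τ₂) : F13 τ₁ ≤ F13 τ₂ + (τ₂ - τ₁) := by
  obtain ⟨y, hy, hFy⟩ := (F13_isGreatest τ₁).1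
  obtain ⟨hy0, hy2⟩ := hy
  obtain ⟨ha0, ha4⟩ := h1
  obtain ⟨hb0, hb4⟩ := h2
  have hub : y * (1 - 2*y) * (y - τ₂)^2 ≤ F13 τ₂ :=
    (F13_isGreatest τ₂).2 ⟨y, ⟨hy0, hy2⟩, rfl⟩
  have hA0 : 0 ≤ y * (1 - 2*y) := mul_nonneg hy0 (by linarith)
  have hA8 : y * (1 - 2*y) ≤ 1/8 := by nlinarith [sq_nonneg (4*y - 1)]
  have hAB : y * (1 - 2*y) * (2*y - τ₁ - τ₂) ≤ 1 := by
    nlinarith [mul_nonneg (by linarith : (0:ℝ) ≤ 1/8 - y*(1 - 2*y))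
      (by linarith : (0:ℝ) ≤ (2*y - τ₁ - τ₂) + 1/2)]
  have step : y * (1 - 2*y) * (y - τ₁)^2 ≤ y * (1 - 2*y) * (y - τ₂)^2 + (τ₂ - τ₁) := by
    nlinarith [mul_nonneg (by linarith : (0:ℝ) ≤ τ₂ - τ₁)
      (by linarith : (0:ℝ) ≤ 1 - y * (1 - 2*y) * (2*y - τ₁ - τ₂))]
  rw [hFy]
  linarith

lemma F13_continuousOn : ContinuousOn F13 (Set.Icc (0:ℝ) (1/4)) := by
  have : LipschitzOnWith 1 F13 (Set.Icc (0:ℝ) (1/4)) := by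
    rw [lipschitzOnWith_iff_dist_le_mul]
    intro x hx y hy
    rw [Real.dist_eq, Real.dist_eq]
    push_cast
    rw [one_mul]
    rcases le_total x y with h | h
    · have h1 := F13_mono hx hy h
      have h2 := F13_lip hx hy h
      rw [abs_sub_le_iff]
      constructor <;> [skip; skip] <;>
        · rw [abs_of_nonpos (by linarith)] <;> try rw [abs_of_nonneg]
          all_goals linarith
    · have h1 := F13_mono hy hx h
      have h2 := F13_lip hy hx h
      rw [abs_sub_le_iff]
      constructor <;>
        · rw [abs_of_nonneg (by linarith)]
          all_goals linarith
  exact this.continuousOn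

/-- The equation `max_{y∈[0,1/2]} y(1-2y)(y-τ)² = τ²/18` has a unique solution `τ`
in `[0, 1/4]`. -/
theorem stmt_13 :
    ∃! τ : ℝ, τ ∈ Set.Icc (0:ℝ) (1/4) ∧
      IsGreatest {v : ℝ | ∃ y ∈ Set.Icc (0:ℝ) (1/2),
        v = y * (1 - 2*y) * (y - τ)^2} (τ^2 / 18) := by
  -- the auxiliary function h τ = F13 τ - τ²/18
  set h : ℝ → ℝ := fun τ => F13 τ - τ^2 / 18 with hh
  have hcont : ContinuousOn h (Set.Icc (0:ℝ) (1/4)) :=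
    F13_continuousOn.sub ((continuous_pow 2).continuousOn.div_const 18)
  have hF0 : (27:ℝ)/2048 ≤ F13 0 := by
    have := (F13_isGreatest 0).2 ⟨3/8, by norm_num, rfl⟩
    norm_num at this ⊢
    linarith
  have hF14 : F13 (1/4) ≤ 1/512 := by
    obtain ⟨y, hy, hFy⟩ := (F13_isGreatest (1/4)).1
    rw [hFy]
    nlinarith [sq_nonneg (32*y^2 - 16*y + 1)]
  have h0pos : 0 < h 0 := by simp [hh]; norm_num; linarith
  have h14neg : h (1/4) < 0 := by
    simp only [hh]
    norm_num
    linarith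
  have hsub := intermediate_value_Icc' (by norm_num : (0:ℝ) ≤ 1/4) hcont
  have hmem : (0:ℝ) ∈ Set.Icc (h (1/4)) (h 0) := ⟨le_of_lt h14neg, le_of_lt h0pos⟩
  obtain ⟨τ, hτmem, hτ⟩ := hsub hmem
  have hFτ : F13 τ = τ^2 / 18 := by
    simp only [hh] at hτ
    linarith [hτ]
  refine ⟨τ, ⟨hτmem, ?_⟩, ?_⟩
  · have := F13_isGreatest τ
    rw [hFτ] at this
    exact this
  · rintro τ' ⟨hτ'mem, hG'⟩
    have hFτ' : F13 τ' = τ'^2 / 18 := hG'.csSup_eq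
    have hτ0 : 0 ≤ τ := hτmem.1
    have hτ'0 : 0 ≤ τ' := hτ'mem.1
    rcases le_total τ' τ with hle | hle
    · have := F13_mono hτ'mem hτmem hle
      rw [hFτ, hFτ'] at this
      nlinarith
    · have := F13_mono hτmem hτ'mem hle
      rw [hFτ, hFτ'] at this
      nlinarith
end

section
/- The parameter τ of the simplex Chebyshev construction, i.e., the unique τ ∈ [0,1/4] with max_{y∈[0,1/2]} y(1-2y)(y-τ)² = τ²/18, is the smallest real root of the quartic polynomial 2880t⁴ - 5472t³ + 4880t² - 1944t + 243. -/
/-- The unique `τ ∈ [0,1/4]` with `max_{y∈[0,1/2]} y(1-2y)(y-τ)² = τ²/18` is the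
smallest real root of `2880t⁴ - 5472t³ + 4880t² - 1944t + 243`. -/
theorem stmt_18 (τ : ℝ) (hτmem : τ ∈ Set.Icc (0:ℝ) (1/4))
    (hτ : IsGreatest {v : ℝ | ∃ y ∈ Set.Icc (0:ℝ) (1/2),
      v = y * (1 - 2*y) * (y - τ)^2} (τ^2 / 18)) :
    2880 * τ^4 - 5472 * τ^3 + 4880 * τ^2 - 1944 * τ + 243 = 0 ∧
    ∀ t : ℝ, 2880 * t^4 - 5472 * t^3 + 4880 * t^2 - 1944 * t + 243 = 0 → τ ≤ t := by
  obtain ⟨hτ0', hτ14⟩ := hτmem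
  obtain ⟨hmem, hub⟩ := hτ
  -- τ > 0
  have h14 : ((1:ℝ)/4) * (1 - 2*(1/4)) * ((1/4) - τ)^2 ≤ τ^2/18 := by
    apply hub
    exact ⟨1/4, by constructor <;> norm_num, rfl⟩
  have hτpos : 0 < τ := by
    rcases lt_or_eq_of_le hτ0' with h | h
    · exact h
    · exfalso; rw [← h] at h14; norm_num at h14
  -- the maximizer
  obtain ⟨y, ⟨hy0, hy12⟩, hy⟩ := hmem
  have hypos : 0 < y := by
    rcases lt_or_eq_of_le hy0 with h | h
    · exact h
    · exfalso
      rw [← h] at hy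
      have : τ^2 > 0 := by positivity
      nlinarith
  have hylt : y < 1/2 := by
    rcases lt_or_eq_of_le hy12 with h | h
    · exact h
    · exfalso
      rw [h] at hy
      have : τ^2 > 0 := by positivity
      nlinarith
  have hyτ : y ≠ τ := by
    intro h
    rw [h] at hy
    have : τ^2 > 0 := by positivity
    simp at hy
    nlinarith
  -- local max, derivative zero
  have hloc : IsLocalMax (fun z : ℝ => z * (1 - 2*z) * (z - τ)^2) y := by
    have hmem' : Set.Icc (0:ℝ) (1/2) ∈ nhds y := Icc_mem_nhds hypos hylt
    filter_upwards [hmem'] with z hz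
    have := hub ⟨z, hz, rfl⟩
    simpa [← hy] using this
  have hd : HasDerivAt (fun z : ℝ => z * (1 - 2*z) * (z - τ)^2)
      ((1 - 4*y) * (y - τ)^2 + y * (1 - 2*y) * (2*(y - τ))) y := by
    have h1 : HasDerivAt (fun z : ℝ => z * (1 - 2*z)) (1 - 4*y) y := by
      have := (hasDerivAt_id y).mul ((hasDerivAt_const y (1:ℝ)).sub ((hasDerivAt_id y).const_mul 2))
      exact this.congr_deriv (by simp only [Pi.sub_apply, id_eq]; ring)
    have h2 : HasDerivAt (fun z : ℝ => (z - τ)^2) (2*(y - τ)) y := by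
      have := ((hasDerivAt_id y).sub_const τ).pow 2
      exact this.congr_deriv (by simp only [id_eq]; norm_num)
    have := h1.mul h2
    exact this.congr_deriv (by ring)
  have hD : (1 - 4*y) * (y - τ)^2 + y * (1 - 2*y) * (2*(y - τ)) = 0 :=
    hloc.hasDerivAt_eq_zero hd
  -- factor out (y - τ)
  have hE2 : -8*y^2 + (3 + 4*τ)*y - τ = 0 := by
    have hfac : (y - τ) * (-8*y^2 + (3 + 4*τ)*y - τ) = 0 := by linear_combination hD
    rcases mul_eq_zero.mp hfac with h | h
    · exact absurd (by linarith [sub_eq_zero.mp h] : y = τ) hyτ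
    · exact h
  have h1 : y * (1 - 2*y) * (y - τ)^2 = τ^2/18 := hy.symm
  -- the quartic equation via resultant identity
  have hq : τ^2 * (2880 * τ^4 - 5472 * τ^3 + 4880 * τ^2 - 1944 * τ + 243) = 0 := by
    linear_combination
      (18 * ((-243) + 1080*τ + 160*τ^2 - 1152*τ^3 + 2304*τ^4
        + y*(648 - 3168*τ + 3456*τ^2 - 4608*τ^3))) * h1
      + (864*τ^2 - 5040*τ^3 + 6624*τ^4 - 5184*τ^5
        + y*(-2430*τ + 10944*τ^2 - 864*τ^3 - 5184*τ^4 + 20736*τ^5)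
        + y^2*(1458 - 2268*τ - 20160*τ^2 + 25920*τ^3 - 41472*τ^4)
        + y^3*(-2916 + 14256*τ - 15552*τ^2 + 20736*τ^3)) * hE2
  have hquart : 2880 * τ^4 - 5472 * τ^3 + 4880 * τ^2 - 1944 * τ + 243 = 0 := by
    have hτ2 : (τ:ℝ)^2 ≠ 0 := by positivity
    exact (mul_eq_zero.mp hq).resolve_left hτ2
  refine ⟨hquart, fun t ht => ?_⟩
  by_contra hlt
  push_neg at hlt
  rcases le_or_gt t 0 with h | h
  · nlinarith
  · -- 0 < t < τ ≤ 1/4 : quartic strictly decreasing on [0,1/4]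
    have ht14 : t ≤ 1/4 := le_of_lt (lt_of_lt_of_le hlt hτ14)
    have hfac : (t - τ) * (2880*(t + τ)*(t^2 + τ^2)
        - 5472*(t^2 + t*τ + τ^2) + 4880*(t + τ) - 1944) = 0 := by
      linear_combination ht - hquart
    have hneg : 2880*(t + τ)*(t^2 + τ^2)
        - 5472*(t^2 + t*τ + τ^2) + 4880*(t + τ) - 1944 < 0 := by
      nlinarith [mul_nonneg (by linarith : (0:ℝ) ≤ 1/4 - t) (by linarith : (0:ℝ) ≤ 1/4 - τ),
        sq_nonneg (t - τ), sq_nonneg (t + τ - 1/2),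
        mul_nonneg (mul_nonneg h.le hτpos.le) (by linarith : (0:ℝ) ≤ 1/2 - t - τ),
        mul_nonneg (sq_nonneg (t - τ)) (by linarith : (0:ℝ) ≤ 1/2 - t - τ),
        mul_nonneg (mul_nonneg (by linarith : (0:ℝ) ≤ 1/4 - t) (by linarith : (0:ℝ) ≤ 1/4 - τ)) (by linarith : (0:ℝ) ≤ t + τ)]
    rcases mul_eq_zero.mp hfac with h' | h'
    · exact absurd (by linarith [sub_eq_zero.mp h'] : t = τ) (ne_of_lt hlt)
    · linarith
end
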